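/- arXiv:0905.2585 — 4 statements merged into one kernel-verified Lean document; each statement's English description precedes it below -/
import Mathlib

section
/- Consider the system y₁ = x(1 + y₂ + 2y₁²), y₂ = x(1 + y₁ + 2y₂²), together with the characteristic condition (1 - 4x·y₁)(1 - 4x·y₂) - x² = 0. If (a, b, c) is a solution with a, b, c > 0, then b = c. -/
theorem stmt6 (a b c : ℝ) (ha : 0 < a) (hb : 0 < b) (hc : 0 < c)
    (h1 : b = a * (1 + c + 2 * b^2))
    (h2 : c = a * (1 + b + 2 * c^2))
    (h3 : (1 - 4 * a * b) * (1 - 4 * a * c) - a^2 = 0) :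
    b = c := by
  have key : (b - c) * (1 + a - 2 * a * (b + c)) = 0 := by linear_combination h1 - h2
  rcases mul_eq_zero.mp key with h | h4
  · linarith [sub_eq_zero.mp h]
  · have h5 : 4 * a^2 * (b - c)^2 = 0 := by
      linear_combination (1 - a - 2*a*(b+c)) * h4 - h3
    have h6 : (b - c)^2 = 0 := by
      have := sq_nonneg a
      nlinarith [sq_nonneg (b - c)]
    have := pow_eq_zero_iff (n := 2) (by norm_num) |>.mp h6
    linarith
end

section
/- The positive real solutions (a, b) of the system b = a(1 + b + 2b²) and a² = (1 - 4ab)² are exactly the two points ((2√2 - 1)/7, 1/√2) and ((2√3 - 1)/11, (1 + √3)/2). -/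
theorem stmt7 (a b : ℝ) (ha : 0 < a) (hb : 0 < b) :
    (b = a * (1 + b + 2 * b^2) ∧ a^2 = (1 - 4 * a * b)^2) ↔
      ((a = (2 * Real.sqrt 2 - 1) / 7 ∧ b = 1 / Real.sqrt 2) ∨
       (a = (2 * Real.sqrt 3 - 1) / 11 ∧ b = (1 + Real.sqrt 3) / 2)) := by
  have h2 : Real.sqrt 2 ^ 2 = 2 := Real.sq_sqrt (by norm_num)
  have h3 : Real.sqrt 3 ^ 2 = 3 := Real.sq_sqrt (by norm_num)
  have p2 : Real.sqrt 2 > 0 := Real.sqrt_pos.mpr (by norm_num)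
  have p3 : Real.sqrt 3 > 0 := Real.sqrt_pos.mpr (by norm_num)
  constructor
  · rintro ⟨h1, hsq⟩
    have hfac : (a - (1 - 4*a*b)) * (a + (1 - 4*a*b)) = 0 := by nlinarith [hsq]
    rcases mul_eq_zero.mp hfac with h | h
    · -- a = 1 - 4ab
      left
      have hb2 : b^2 = 1/2 := by nlinarith [h1, h, sq_nonneg b, mul_pos ha hb]
      have hbval : b = 1 / Real.sqrt 2 := by
        have hf : (b - 1/Real.sqrt 2) * (b + 1/Real.sqrt 2) = 0 := by
          field_simp
          nlinarith [hb2, h2]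
        rcases mul_eq_zero.mp hf with h' | h'
        · linarith
        · exfalso; have : 1/Real.sqrt 2 > 0 := by positivity
          linarith
      refine ⟨?_, hbval⟩
      have ha1 : a * (1 + 4*b) = 1 := by linear_combination h
      rw [hbval] at ha1
      have : a * (1 + 4*(1/Real.sqrt 2)) = 1 := ha1
      field_simp at this
      -- a * (sqrt 2 + 4) = sqrt 2  -> a = sqrt2/(sqrt2+4) = (2√2-1)/7
      nlinarith [this, h2, p2]
    · -- a = 4ab - 1
      right
      have hb2 : 2*b^2 - 2*b - 1 = 0 := by nlinarith [h1, h]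
      have hbval : b = (1 + Real.sqrt 3) / 2 := by
        have hf : (b - (1 + Real.sqrt 3)/2) * (b - (1 - Real.sqrt 3)/2) = 0 := by
          nlinarith [hb2, h3]
        rcases mul_eq_zero.mp hf with h' | h'
        · linarith
        · exfalso
          have : Real.sqrt 3 > 1 := by nlinarith [h3, p3]
          linarith
      refine ⟨?_, hbval⟩
      have ha1 : a * (4*b - 1) = 1 := by linear_combination -h
      rw [hbval] at ha1
      linear_combination ((2*Real.sqrt 3 - 1)/11) * ha1 + (-4*a/11) * h3
  · have hinv : (1:ℝ)/Real.sqrt 2 = Real.sqrt 2/2 := by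
      rw [div_eq_div_iff p2.ne' two_ne_zero]
      linear_combination -h2
    rintro (⟨ha', hb'⟩ | ⟨ha', hb'⟩) <;> subst ha' <;> subst hb' <;> constructor
    · rw [hinv]; linear_combination ((-2*Real.sqrt 2 - 1)/14) * h2
    · rw [hinv]; linear_combination ((-16*Real.sqrt 2^2 + 16*Real.sqrt 2 + 24)/49) * h2
    · linear_combination ((-2*Real.sqrt 3 - 5)/22) * h3
    · linear_combination ((-16*Real.sqrt 3^2 - 16*Real.sqrt 3 + 56)/121) * h3
end

section
/- With A(x) = (1 - √(1 - 36x²))/(18x), the point (a, b) with a = (1 + 16√2)/146 and b = 1 + √2 satisfies b = A(a)(1 + b + b²) and (1 - 2A(a)b)² = A(a)². -/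
theorem stmt9 :
    let A : ℝ → ℝ := fun x => (1 - Real.sqrt (1 - 36 * x^2)) / (18 * x)
    let a : ℝ := (1 + 16 * Real.sqrt 2) / 146
    let b : ℝ := 1 + Real.sqrt 2
    b = A a * (1 + b + b^2) ∧ (1 - 2 * A a * b)^2 = (A a)^2 := by
  intro A a b
  set s := Real.sqrt 2 with hs_def
  have hs2 : s ^ 2 = 2 := Real.sq_sqrt (by norm_num)
  have hs1 : 1 ≤ s := by
    nlinarith [Real.sqrt_nonneg 2, hs2]
  have hsqrt : Real.sqrt (1 - 36 * a ^ 2) = (18 * s - 8) / 73 := by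
    have h1 : 1 - 36 * a ^ 2 = ((18 * s - 8) / 73) ^ 2 := by
      show 1 - 36 * ((1 + 16 * s) / 146) ^ 2 = ((18 * s - 8) / 73) ^ 2
      field_simp
      nlinarith [hs2]
    rw [h1, Real.sqrt_sq (by nlinarith : (0:ℝ) ≤ (18 * s - 8) / 73)]
  have hA : A a = (2 * s - 1) / 7 := by
    show (1 - Real.sqrt (1 - 36 * a ^ 2)) / (18 * a) = (2 * s - 1) / 7
    rw [hsqrt]
    show (1 - (18 * s - 8) / 73) / (18 * ((1 + 16 * s) / 146)) = (2 * s - 1) / 7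
    have h16 : (0:ℝ) < 1 + 16 * s := by nlinarith
    field_simp
    nlinarith [hs2]
  rw [hA]
  constructor
  · show 1 + s = (2 * s - 1) / 7 * (1 + (1 + s) + (1 + s) ^ 2)
    field_simp
    nlinarith [hs2]
  · show (1 - 2 * ((2 * s - 1) / 7) * (1 + s)) ^ 2 = ((2 * s - 1) / 7) ^ 2
    field_simp
    nlinarith [hs2]
end

section
/- Let A : [0,1] → M be a continuous map into k×k nonnegative real matrices such that 1 is an eigenvalue of A(α) for every α ∈ [0,1], and suppose the largest real eigenvalue Λ(α) of A(α) depends continuously on α, Λ(α) ≥ 1 for all α, Λ(0) = 1, and whenever Λ(γ) = 1 it is a simple root of the characteristic polynomial of A(γ). Then Λ(α) = 1 for all α ∈ [0,1]. -/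
open Polynomial Matrix

theorem stmt16 {k : ℕ} (A : ℝ → Matrix (Fin k) (Fin k) ℝ) (Λ : ℝ → ℝ)
    (hAcont : ContinuousOn A (Set.Icc 0 1))
    (hAnn : ∀ α ∈ Set.Icc (0:ℝ) 1, ∀ i j, 0 ≤ A α i j)
    (heig1 : ∀ α ∈ Set.Icc (0:ℝ) 1, (A α).charpoly.IsRoot 1)
    (hΛcont : ContinuousOn Λ (Set.Icc 0 1))
    (hΛroot : ∀ α ∈ Set.Icc (0:ℝ) 1, (A α).charpoly.IsRoot (Λ α))
    (hΛmax : ∀ α ∈ Set.Icc (0:ℝ) 1, ∀ μ : ℝ, (A α).charpoly.IsRoot μ → μ ≤ Λ α)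
    (hΛge : ∀ α ∈ Set.Icc (0:ℝ) 1, 1 ≤ Λ α)
    (hΛ0 : Λ 0 = 1)
    (hsimple : ∀ γ ∈ Set.Icc (0:ℝ) 1, Λ γ = 1 →
      Polynomial.rootMultiplicity (Λ γ) (A γ).charpoly = 1) :
    ∀ α ∈ Set.Icc (0:ℝ) 1, Λ α = 1 := by
  classical
  have h01 : (0:ℝ) ∈ Set.Icc (0:ℝ) 1 := ⟨le_refl 0, zero_le_one⟩
  -- k must be positive, else charpoly = 1 has no roots
  rcases Nat.eq_zero_or_pos k with hk0 | hk
  · subst hk0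
    exfalso
    have h := heig1 0 h01
    have : (A 0).charpoly = 1 := by
      rw [Matrix.charpoly]
      exact Matrix.det_isEmpty
    rw [this] at h
    simp [Polynomial.IsRoot] at h
  -- evaluation of charpoly as a determinant
  have evalchar : ∀ (M : Matrix (Fin k) (Fin k) ℝ) (r : ℝ),
      M.charpoly.eval r = ((Matrix.scalar (Fin k) r) - M).det := by
    intro M r
    rw [Matrix.charpoly, eval_det, Matrix.matPolyEquiv_charmatrix]
    simp
  -- nodes for interpolation, all different from 1
  set v : Fin k → ℝ := fun i => (i : ℝ) + 2 with hv
  have hvinj : Set.InjOn v (Finset.univ : Finset (Fin k)) := by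
    intro i _ j _ hij
    have : ((i : ℕ) : ℝ) = ((j : ℕ) : ℝ) := by
      simpa [hv] using hij
    exact Fin.ext (Nat.cast_injective this)
  have hvne1 : ∀ i, v i ≠ 1 := by
    intro i
    have : (0:ℝ) ≤ (i : ℝ) := Nat.cast_nonneg _
    simp only [hv]
    nlinarith
  -- the quotient polynomial
  set q : ℝ → ℝ[X] := fun α => (A α).charpoly /ₘ (X - C 1) with hqdef
  have hq : ∀ α ∈ Set.Icc (0:ℝ) 1, (X - C 1) * q α = (A α).charpoly := by
    intro α hα
    exact mul_divByMonic_eq_iff_isRoot.2 (heig1 α hα)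
  have hcard : (Finset.univ : Finset (Fin k)).card = k := by simp
  have hqdeg : ∀ α, (q α).degree < ((Finset.univ : Finset (Fin k)).card : WithBot ℕ) := by
    intro α
    have h1 : (q α).natDegree = k - 1 := by
      rw [hqdef]
      rw [natDegree_divByMonic _ (monic_X_sub_C (1:ℝ)), natDegree_X_sub_C,
        Matrix.charpoly_natDegree_eq_dim, Fintype.card_fin]
    calc (q α).degree ≤ ((q α).natDegree : WithBot ℕ) := degree_le_natDegree
      _ < (((Finset.univ : Finset (Fin k)).card : ℕ) : WithBot ℕ) := by
          rw [h1, hcard]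
          exact_mod_cast Nat.sub_lt hk zero_lt_one
  -- eval of q at nodes in terms of determinants
  have hqeval : ∀ α ∈ Set.Icc (0:ℝ) 1, ∀ i : Fin k,
      (q α).eval (v i) = ((Matrix.scalar (Fin k) (v i)) - A α).det / (v i - 1) := by
    intro α hα i
    have h := congrArg (Polynomial.eval (v i)) (hq α hα)
    simp only [eval_mul, eval_sub, eval_X, eval_C] at h
    rw [evalchar] at h
    rw [eq_div_iff (sub_ne_zero.2 (hvne1 i))]
    linarith [h]
  -- the key continuous function
  set G : ℝ → ℝ := fun α => ∑ i : Fin k,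
      (((Matrix.scalar (Fin k) (v i)) - A α).det / (v i - 1)) *
        (Lagrange.basis Finset.univ v i).eval (Λ α) with hGdef
  have hGq : ∀ α ∈ Set.Icc (0:ℝ) 1, G α = (q α).eval (Λ α) := by
    intro α hα
    have h := Lagrange.eq_interpolate (f := q α) hvinj (hqdeg α)
    conv_rhs => rw [h]
    rw [Lagrange.interpolate_apply, eval_finset_sum]
    simp only [eval_mul, eval_C]
    refine (Finset.sum_congr rfl fun i _ => ?_).symm
    rw [hqeval α hα i]
  have hGcont : ContinuousOn G (Set.Icc (0:ℝ) 1) := by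
    apply continuousOn_finset_sum
    intro i _
    have hdet : Continuous fun M : Matrix (Fin k) (Fin k) ℝ =>
        ((Matrix.scalar (Fin k) (v i)) - M).det :=
      Continuous.matrix_det (continuous_const.sub continuous_id)
    exact ((hdet.comp_continuousOn hAcont).div_const _).mul
      ((Lagrange.basis Finset.univ v i).continuous.comp_continuousOn hΛcont)
  -- G vanishes exactly where Λ > 1
  have hGzero : ∀ α ∈ Set.Icc (0:ℝ) 1, Λ α ≠ 1 → G α = 0 := by
    intro α hα hne
    have hgt : 1 < Λ α := lt_of_le_of_ne (hΛge α hα) (Ne.symm hne)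
    have hroot := hΛroot α hα
    have h := congrArg (Polynomial.eval (Λ α)) (hq α hα)
    simp only [eval_mul, eval_sub, eval_X, eval_C] at h
    rw [hroot] at h
    have hne0 : Λ α - 1 ≠ 0 := sub_ne_zero.2 (ne_of_gt hgt)
    rw [hGq α hα]
    exact (mul_eq_zero.1 h).resolve_left hne0
  have hGne : ∀ α ∈ Set.Icc (0:ℝ) 1, Λ α = 1 → G α ≠ 0 := by
    intro α hα heq hzero
    have hp0 : (A α).charpoly ≠ 0 := (Matrix.charpoly_monic (A α)).ne_zero
    have hdvd : (X - C (1:ℝ)) ∣ q α := by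
      apply dvd_iff_isRoot.2
      rw [Polynomial.IsRoot, ← heq, ← hGq α hα]
      exact hzero
    have h2 : (X - C (1:ℝ)) ^ 2 ∣ (A α).charpoly := by
      rw [← hq α hα, sq]
      exact mul_dvd_mul_left _ hdvd
    have := (le_rootMultiplicity_iff hp0).2 h2
    rw [← heq, hsimple α hα heq] at this
    omega
  -- connectedness on the subtype
  haveI : PreconnectedSpace (Set.Icc (0:ℝ) 1) :=
    Subtype.preconnectedSpace isPreconnected_Icc
  set U : Set (Set.Icc (0:ℝ) 1) := {x | Λ (x : ℝ) = 1} with hU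
  have hfcont : Continuous fun x : Set.Icc (0:ℝ) 1 => Λ (x : ℝ) := hΛcont.restrict
  have hgcont : Continuous fun x : Set.Icc (0:ℝ) 1 => G (x : ℝ) := hGcont.restrict
  have hUclosed : IsClosed U := isClosed_eq hfcont continuous_const
  have hUcompl : Uᶜ = {x : Set.Icc (0:ℝ) 1 | G (x : ℝ) = 0} := by
    ext x
    simp only [hU, Set.mem_compl_iff, Set.mem_setOf_eq]
    constructor
    · intro hne
      exact hGzero x x.2 hne
    · intro hz heq
      exact hGne x x.2 heq hz
  have hUopen : IsOpen U := by
    have hc : IsClosed Uᶜ := hUcompl ▸ isClosed_eq hgcont continuous_const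
    exact isClosed_compl_iff.mp hc
  have hUne : U.Nonempty := ⟨⟨0, h01⟩, hΛ0⟩
  have := (IsClopen.eq_univ ⟨hUclosed, hUopen⟩ hUne : U = Set.univ)
  intro α hα
  have : (⟨α, hα⟩ : Set.Icc (0:ℝ) 1) ∈ U := this ▸ Set.mem_univ _
  exact this
end
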